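/- Let β, x₁,…,x_d, b₁, b₂,… be independent indeterminates, work in the ring of formal power series over ℤ in these variables, and for a variable y set ȳ := -y/(1+βy). Fix j with 1 ≤ j ≤ d and k ≥ 0. Then for every integer m with m ≥ k: Σ_{p=0}^{d-1} Σ_{s=0}^{p} C(p,s) β^s G^{(k)}_{m-p+s} · (-1)^p ē_p^{(j)} = x_j^{m-k} · [x_j|b]^k, where C(p,s) is the usual binomial coefficient and ē_p^{(j)} denotes the p-th elementary symmetric polynomial in the d-1 quantities -x̄_i = x_i/(1+βx_i) for 1 ≤ i ≤ d, i ≠ j. -/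

import Mathlib

open scoped BigOperators

namespace GrothDet

/-- Index type for the indeterminates: `β`, `x₁,…,x_d`, `b₁,b₂,…`. -/
abbrev Idx (d : ℕ) := Unit ⊕ Fin d ⊕ ℕ

/-- The ambient ring: formal power series over `ℤ` in `β`, the `xᵢ` and the `bⱼ`. -/
abbrev R (d : ℕ) := MvPowerSeries (Idx d) ℤ

noncomputable def β (d : ℕ) : R d := MvPowerSeries.X (Sum.inl ())
noncomputable def x (d : ℕ) (i : Fin d) : R d := MvPowerSeries.X (Sum.inr (Sum.inl i))
noncomputable def b (d : ℕ) (ℓ : ℕ) : R d := MvPowerSeries.X (Sum.inr (Sum.inr ℓ))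

/-- `x ⊕ y := x + y + βxy`. -/
noncomputable def oplus (d : ℕ) (u v : R d) : R d := u + v + β d * u * v

/-- `[y|b]^k := (y ⊕ b₁)⋯(y ⊕ b_k)`. -/
noncomputable def fb (d : ℕ) (y : R d) (k : ℕ) : R d :=
  ∏ ℓ ∈ Finset.range k, oplus d y (b d ℓ)

/-- The multiplicative inverse of `1 + β * x j` (a unit since its constant term is `1`). -/
noncomputable def invOneAdd (d : ℕ) (j : Fin d) : R d :=
  MvPowerSeries.invOfUnit (1 + β d * x d j) 1

/-- `F^{(k)}(u) = ∏ᵢ (1+βxᵢ)/(1-xᵢu) · ∏_{ℓ=1}^k (1+(u+β)b_ℓ)` as a power series in `u`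
over `R d`; here `(1-xᵢu)⁻¹ = ∑_n xᵢⁿ uⁿ`. -/
noncomputable def F (d : ℕ) (k : ℕ) : PowerSeries (R d) :=
  (∏ i : Fin d,
      PowerSeries.C (1 + β d * x d i) * PowerSeries.mk fun n => x d i ^ n) *
    ∏ ℓ ∈ Finset.range k,
      (1 + (PowerSeries.X + PowerSeries.C (β d)) * PowerSeries.C (b d ℓ))

/-- `[u^t] F^{(k)}(u)`, extended by `0` in negative degrees `t`. -/
noncomputable def Fcoeff (d : ℕ) (k : ℕ) (t : ℤ) : R d :=
  if 0 ≤ t then PowerSeries.coeff t.toNat (F d k) else 0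

/-- The sum `∑_{s≥0} f s` of a family of power series such that `β^s ∣ f s`:
it is defined coefficientwise; on the coefficient of a monomial `n` only the
(finitely many) terms with `s ≤ n(β)` contribute, and the value is the limit of the
partial sums in the formal power series topology. -/
noncomputable def seriesSum (d : ℕ) (f : ℕ → R d) : R d :=
  (fun n => ∑ s ∈ Finset.range (n (Sum.inl ()) + 1), MvPowerSeries.coeff n (f s) :
    (Idx d →₀ ℕ) → ℤ)

/-- `G^{(k)}_m = ∑_{s≥0} (-β)^s [u^{m+s}] F^{(k)}(u)`. -/
noncomputable def G (d : ℕ) (k : ℕ) (m : ℤ) : R d :=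
  seriesSum d fun s => (-β d) ^ s * Fcoeff d k (m + s)

/-- The `p`-th elementary symmetric function of the family `f` restricted to `S`. -/
noncomputable def esym (d : ℕ) (S : Finset (Fin d)) (p : ℕ) (f : Fin d → R d) : R d :=
  ∑ t ∈ S.powersetCard p, ∏ i ∈ t, f i

/-- `x_i/(1+βx_i) = -x̄_i`. -/
noncomputable def xbar (d : ℕ) (i : Fin d) : R d := x d i * invOneAdd d i


/-! ### Auxiliary machinery -/

noncomputable def coeffZ (d : ℕ) (t : ℤ) (Ψ : PowerSeries (R d)) : R d :=
  if 0 ≤ t then PowerSeries.coeff t.toNat Ψ else 0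

noncomputable def Gt (d : ℕ) (Ψ : PowerSeries (R d)) (m : ℤ) : R d :=
  seriesSum d fun s => (-β d) ^ s * coeffZ d (m + s) Ψ

variable {d : ℕ}

lemma coeff_seriesSum (f : ℕ → R d) (n : Idx d →₀ ℕ) :
    MvPowerSeries.coeff n (seriesSum d f)
      = ∑ s ∈ Finset.range (n (Sum.inl ()) + 1), MvPowerSeries.coeff n (f s) := rfl

lemma betacut (s : ℕ) (g : R d) (n : Idx d →₀ ℕ) (h : n (Sum.inl ()) < s) :
    MvPowerSeries.coeff n (β d ^ s * g) = 0 := by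
  rw [β, MvPowerSeries.X_pow_eq, MvPowerSeries.coeff_monomial_mul, if_neg]
  rw [Finsupp.single_le_iff]
  omega

lemma negbetacut (s : ℕ) (g : R d) (n : Idx d →₀ ℕ) (h : n (Sum.inl ()) < s) :
    MvPowerSeries.coeff n ((-β d) ^ s * g) = 0 := by
  have : (-β d) ^ s * g = β d ^ s * ((-1) ^ s * g) := by
    rw [neg_pow]; ring
  rw [this, betacut _ _ _ h]

lemma coeff_seriesSum_of_cutoff (f : ℕ → R d)
    (hf : ∀ s n, n (Sum.inl ()) < s → MvPowerSeries.coeff n (f s) = 0)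
    {n : Idx d →₀ ℕ} {N : ℕ} (hN : n (Sum.inl ()) < N) :
    MvPowerSeries.coeff n (seriesSum d f) = ∑ s ∈ Finset.range N, MvPowerSeries.coeff n (f s) := by
  rw [coeff_seriesSum]
  refine Finset.sum_subset (by rw [Finset.range_subset_range]; omega) ?_
  intro s hs hns
  refine hf s n ?_
  simp only [Finset.mem_range] at hs hns
  omega

lemma seriesSum_telescope (h : ℕ → R d)
    (hh : ∀ s n, n (Sum.inl ()) < s → MvPowerSeries.coeff n (h s) = 0) :
    seriesSum d (fun s => h s - h (s + 1)) = h 0 := by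
  apply MvPowerSeries.ext; intro n
  rw [coeff_seriesSum]
  simp only [map_sub]
  rw [Finset.sum_range_sub' (fun s => MvPowerSeries.coeff n (h s))]
  rw [hh (n (Sum.inl ()) + 1) n (by omega), sub_zero]

lemma seriesSum_add (f g : ℕ → R d) :
    seriesSum d (fun s => f s + g s) = seriesSum d f + seriesSum d g := by
  apply MvPowerSeries.ext; intro n
  rw [map_add, coeff_seriesSum, coeff_seriesSum, coeff_seriesSum, ← Finset.sum_add_distrib]
  simp [map_add]

lemma seriesSum_zero : seriesSum d (fun _ => (0 : R d)) = 0 := by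
  apply MvPowerSeries.ext; intro n
  simp [coeff_seriesSum]

lemma mul_seriesSum (r : R d) (f : ℕ → R d)
    (hf : ∀ s n, n (Sum.inl ()) < s → MvPowerSeries.coeff n (f s) = 0) :
    r * seriesSum d f = seriesSum d (fun s => r * f s) := by
  classical
  apply MvPowerSeries.ext; intro n
  rw [MvPowerSeries.coeff_mul, coeff_seriesSum]
  have h1 : ∀ p ∈ Finset.HasAntidiagonal.antidiagonal n,
      MvPowerSeries.coeff p.1 r * MvPowerSeries.coeff p.2 (seriesSum d f)
      = ∑ s ∈ Finset.range (n (Sum.inl ()) + 1),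
          MvPowerSeries.coeff p.1 r * MvPowerSeries.coeff p.2 (f s) := by
    intro p hp
    have hple : p.2 (Sum.inl ()) ≤ n (Sum.inl ()) := by
      have := Finset.HasAntidiagonal.mem_antidiagonal.1 hp
      rw [← this]; simp
    rw [coeff_seriesSum_of_cutoff f hf (n := p.2) (N := n (Sum.inl ()) + 1) (by omega),
      Finset.mul_sum]
  rw [Finset.sum_congr rfl h1, Finset.sum_comm]
  exact Finset.sum_congr rfl fun s _ => (MvPowerSeries.coeff_mul n r (f s)).symm

/-! ### coeffZ lemmas -/

lemma coeffZ_add (t : ℤ) (Ψ Θ : PowerSeries (R d)) :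
    coeffZ d t (Ψ + Θ) = coeffZ d t Ψ + coeffZ d t Θ := by
  unfold coeffZ
  split <;> simp

lemma coeffZ_zero (t : ℤ) : coeffZ d t (0 : PowerSeries (R d)) = 0 := by
  unfold coeffZ; split <;> simp

lemma coeffZ_C_mul (t : ℤ) (r : R d) (Ψ : PowerSeries (R d)) :
    coeffZ d t (PowerSeries.C r * Ψ) = r * coeffZ d t Ψ := by
  unfold coeffZ
  split
  · rw [PowerSeries.coeff_C_mul]
  · rw [mul_zero]

lemma coeffZ_X_mul (t : ℤ) (Ψ : PowerSeries (R d)) :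
    coeffZ d t (PowerSeries.X * Ψ) = coeffZ d (t - 1) Ψ := by
  unfold coeffZ
  rcases lt_trichotomy t 0 with h | h | h
  · rw [if_neg (by omega), if_neg (by omega)]
  · subst h
    rw [if_pos le_rfl, if_neg (by omega)]
    simp [PowerSeries.coeff_zero_eq_constantCoeff, map_mul]
  · rw [if_pos (by omega), if_pos (by omega)]
    have : t.toNat = (t - 1).toNat + 1 := by omega
    rw [this, PowerSeries.coeff_succ_X_mul]

lemma coeffZ_XaddC (t : ℤ) (Ψ : PowerSeries (R d)) :
    coeffZ d t ((PowerSeries.X + PowerSeries.C (β d)) * Ψ)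
      = coeffZ d (t - 1) Ψ + β d * coeffZ d t Ψ := by
  rw [add_mul, coeffZ_add, coeffZ_X_mul, coeffZ_C_mul]

/-! ### Gt lemmas -/

lemma seriesSum_congr (f g : ℕ → R d) (h : ∀ s, f s = g s) :
    seriesSum d f = seriesSum d g := by
  apply MvPowerSeries.ext; intro n
  rw [coeff_seriesSum, coeff_seriesSum]
  exact Finset.sum_congr rfl fun s _ => by rw [h s]

lemma Gt_add (Ψ Θ : PowerSeries (R d)) (m : ℤ) :
    Gt d (Ψ + Θ) m = Gt d Ψ m + Gt d Θ m := by
  unfold Gt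
  rw [← seriesSum_add]
  exact seriesSum_congr _ _ fun s => by rw [coeffZ_add]; ring

lemma Gt_zero (m : ℤ) : Gt d (0 : PowerSeries (R d)) m = 0 := by
  unfold Gt
  rw [← seriesSum_zero (d := d)]
  exact seriesSum_congr _ _ fun s => by rw [coeffZ_zero, mul_zero]

noncomputable def GtHom (d : ℕ) (m : ℤ) : PowerSeries (R d) →+ R d where
  toFun := fun Ψ => Gt d Ψ m
  map_zero' := Gt_zero m
  map_add' := fun Ψ Θ => Gt_add Ψ Θ m

lemma Gt_sum {ι : Type*} (S : Finset ι) (f : ι → PowerSeries (R d)) (m : ℤ) :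
    Gt d (∑ i ∈ S, f i) m = ∑ i ∈ S, Gt d (f i) m :=
  map_sum (GtHom d m) f S

lemma Gt_C_mul (r : R d) (Ψ : PowerSeries (R d)) (m : ℤ) :
    Gt d (PowerSeries.C r * Ψ) m = r * Gt d Ψ m := by
  unfold Gt
  rw [mul_seriesSum r _ (fun s n h => negbetacut s _ n h)]
  exact seriesSum_congr _ _ fun s => by rw [coeffZ_C_mul]; ring

lemma Gt_X_mul (Ψ : PowerSeries (R d)) (m : ℤ) :
    Gt d (PowerSeries.X * Ψ) m = Gt d Ψ (m - 1) := by
  unfold Gt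
  refine seriesSum_congr _ _ fun s => ?_
  rw [coeffZ_X_mul]
  have : m + (s : ℤ) - 1 = m - 1 + s := by ring
  rw [this]

lemma Gt_X_pow_mul (a : ℕ) (Ψ : PowerSeries (R d)) (m : ℤ) :
    Gt d (PowerSeries.X ^ a * Ψ) m = Gt d Ψ (m - a) := by
  induction a generalizing m with
  | zero => simp
  | succ a ih =>
    have h1 : (PowerSeries.X : PowerSeries (R d)) ^ (a + 1) * Ψ
        = PowerSeries.X * (PowerSeries.X ^ a * Ψ) := by ring
    have h2 : m - 1 - (a : ℤ) = m - ((a : ℕ) + 1 : ℕ) := by push_cast; ring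
    rw [h1, Gt_X_mul, ih, h2]

lemma Gt_XaddC_mul (Ψ : PowerSeries (R d)) (m : ℤ) :
    Gt d ((PowerSeries.X + PowerSeries.C (β d)) * Ψ) m = coeffZ d (m - 1) Ψ := by
  unfold Gt
  have hfun : seriesSum d
      (fun s : ℕ => (-β d) ^ s * coeffZ d (m + s) ((PowerSeries.X + PowerSeries.C (β d)) * Ψ))
      = seriesSum d (fun s => (-β d) ^ s * coeffZ d (m - 1 + s) Ψ
          - (-β d) ^ (s + 1) * coeffZ d (m - 1 + ((s : ℕ) + 1 : ℕ)) Ψ) := by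
    refine seriesSum_congr _ _ fun s => ?_
    rw [coeffZ_XaddC]
    have h1 : m + (s : ℤ) - 1 = m - 1 + s := by ring
    have h2 : m - 1 + (((s : ℕ) + 1 : ℕ) : ℤ) = m + s := by push_cast; ring
    rw [h1, h2]
    ring
  rw [hfun, seriesSum_telescope (fun s => (-β d) ^ s * coeffZ d (m - 1 + s) Ψ)
    (fun s n h => negbetacut s _ n h)]
  simp

/-! ### Structural lemmas -/

noncomputable def SS (d : ℕ) (i : Fin d) : PowerSeries (R d) :=
  PowerSeries.C (1 + β d * x d i) * PowerSeries.mk fun n => x d i ^ n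

noncomputable def B (d : ℕ) (k : ℕ) : PowerSeries (R d) :=
  ∏ ℓ ∈ Finset.range k,
    (1 + (PowerSeries.X + PowerSeries.C (β d)) * PowerSeries.C (b d ℓ))

lemma F_eq (k : ℕ) : F d k = (∏ i : Fin d, SS d i) * B d k := rfl

lemma G_eq (k : ℕ) (m : ℤ) : G d k m = Gt d (F d k) m := rfl

lemma invOneAdd_mul (i : Fin d) : (1 + β d * x d i) * invOneAdd d i = 1 := by
  refine MvPowerSeries.mul_invOfUnit _ 1 ?_
  simp [β, x]

lemma geom (i : Fin d) :
    (1 - PowerSeries.C (x d i) * PowerSeries.X) * PowerSeries.mk (fun n => x d i ^ n) = 1 := by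
  apply PowerSeries.ext; intro n
  cases n with
  | zero =>
    simp [PowerSeries.coeff_zero_eq_constantCoeff, map_mul, map_sub]
  | succ n =>
    rw [sub_mul, one_mul, map_sub, mul_assoc, PowerSeries.coeff_C_mul,
      PowerSeries.coeff_succ_X_mul, PowerSeries.coeff_mk, PowerSeries.coeff_mk,
      PowerSeries.coeff_one, if_neg (by omega)]
    ring

lemma factor_cancel (i : Fin d) :
    (1 - PowerSeries.C (xbar d i) * (PowerSeries.X + PowerSeries.C (β d)))
      * SS d i = 1 := by
  have hca : xbar d i * (1 + β d * x d i) = x d i := by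
    rw [xbar, mul_assoc, mul_comm (invOneAdd d i), invOneAdd_mul, mul_one]
  have key : (1 - PowerSeries.C (xbar d i) * (PowerSeries.X + PowerSeries.C (β d)))
      * PowerSeries.C (1 + β d * x d i)
      = 1 - PowerSeries.C (x d i) * PowerSeries.X := by
    have e1 : PowerSeries.C (xbar d i) * PowerSeries.C (1 + β d * x d i)
        = PowerSeries.C (x d i) := by rw [← map_mul, hca]
    have e2 : (PowerSeries.C (1 + β d * x d i) : PowerSeries (R d))
        = 1 + PowerSeries.C (β d) * PowerSeries.C (x d i) := by
      rw [← map_mul, ← map_one (PowerSeries.C), ← map_add]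
    calc (1 - PowerSeries.C (xbar d i) * (PowerSeries.X + PowerSeries.C (β d)))
          * PowerSeries.C (1 + β d * x d i)
        = PowerSeries.C (1 + β d * x d i)
          - (PowerSeries.C (xbar d i) * PowerSeries.C (1 + β d * x d i))
            * PowerSeries.X
          - (PowerSeries.C (xbar d i) * PowerSeries.C (1 + β d * x d i))
            * PowerSeries.C (β d) := by ring
      _ = 1 - PowerSeries.C (x d i) * PowerSeries.X := by
          rw [e1, e2]; ring
  rw [SS, ← mul_assoc, key, geom]

lemma prod_factor (k : ℕ) (j : Fin d) :
    F d k * ∏ i ∈ Finset.univ \ {j},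
        (1 - PowerSeries.C (xbar d i) * (PowerSeries.X + PowerSeries.C (β d)))
      = SS d j * B d k := by
  classical
  have hsplit : (∏ i : Fin d, SS d i)
      = SS d j * ∏ i ∈ Finset.univ \ {j}, SS d i := by
    rw [← Finset.erase_eq, Finset.mul_prod_erase Finset.univ (SS d) (Finset.mem_univ j)]
  have hone : ∏ i ∈ Finset.univ \ {j},
      ((1 - PowerSeries.C (xbar d i) * (PowerSeries.X + PowerSeries.C (β d)))
        * SS d i) = 1 := by
    rw [Finset.prod_congr rfl (fun i _ => factor_cancel i), Finset.prod_const_one]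
  calc F d k * ∏ i ∈ Finset.univ \ {j},
        (1 - PowerSeries.C (xbar d i) * (PowerSeries.X + PowerSeries.C (β d)))
      = (SS d j * B d k) * ∏ i ∈ Finset.univ \ {j},
          ((1 - PowerSeries.C (xbar d i) * (PowerSeries.X + PowerSeries.C (β d)))
            * SS d i) := by
        rw [F_eq, hsplit, Finset.prod_mul_distrib]; ring
    _ = SS d j * B d k := by rw [hone, mul_one]

lemma prod_one_sub (j : Fin d) :
    ∏ i ∈ Finset.univ \ {j},
        (1 - PowerSeries.C (xbar d i) * (PowerSeries.X + PowerSeries.C (β d)))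
      = ∑ p ∈ Finset.range d,
          PowerSeries.C ((-1 : R d) ^ p * esym d (Finset.univ \ {j}) p (xbar d))
            * (PowerSeries.X + PowerSeries.C (β d)) ^ p := by
  classical
  set S : Finset (Fin d) := Finset.univ \ {j} with hS
  set w : PowerSeries (R d) := PowerSeries.X + PowerSeries.C (β d) with hw
  have hcard : S.card = d - 1 := by
    rw [hS, ← Finset.erase_eq, Finset.card_erase_of_mem (Finset.mem_univ j)]
    simp
  have hd : 0 < d := j.pos
  have step1 : ∏ i ∈ S, (1 - PowerSeries.C (xbar d i) * w)
      = ∑ t ∈ S.powerset, ((-w) ^ t.card * PowerSeries.C (∏ i ∈ t, xbar d i)) := by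
    have : ∀ i ∈ S, (1 - PowerSeries.C (xbar d i) * w)
        = (-w) * PowerSeries.C (xbar d i) + 1 := by intro i _; ring
    rw [Finset.prod_congr rfl this, Finset.prod_add]
    refine Finset.sum_congr rfl fun t _ => ?_
    rw [Finset.prod_const_one, mul_one, Finset.prod_mul_distrib, Finset.prod_const, map_prod]
  rw [step1, Finset.sum_powerset, hcard]
  have hrange : d - 1 + 1 = d := by omega
  rw [hrange]
  refine Finset.sum_congr rfl fun p _ => ?_
  have inner : ∀ t ∈ Finset.powersetCard p S,
      ((-w) ^ t.card * PowerSeries.C (∏ i ∈ t, xbar d i))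
      = (-w) ^ p * PowerSeries.C (∏ i ∈ t, xbar d i) := by
    intro t ht
    rw [(Finset.mem_powersetCard.1 ht).2]
  rw [Finset.sum_congr rfl inner, ← Finset.mul_sum, ← map_sum]
  have : (∑ t ∈ Finset.powersetCard p S, ∏ i ∈ t, xbar d i) = esym d S p (xbar d) := rfl
  rw [this, map_mul, map_pow, map_neg, map_one, neg_pow]
  ring

lemma Gt_pow_mul (p : ℕ) (Ψ : PowerSeries (R d)) (m : ℤ) :
    Gt d ((PowerSeries.X + PowerSeries.C (β d)) ^ p * Ψ) m
      = ∑ s ∈ Finset.range (p + 1), (p.choose s : R d) * (β d ^ s * Gt d Ψ (m - p + s)) := by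
  rw [add_pow, Finset.sum_mul, Gt_sum]
  have lhs_eq : ∀ i ∈ Finset.range (p + 1),
      Gt d ((PowerSeries.X : PowerSeries (R d)) ^ i * PowerSeries.C (β d) ^ (p - i)
          * (p.choose i : PowerSeries (R d)) * Ψ) m
      = (p.choose i : R d) * (β d ^ (p - i) * Gt d Ψ (m - i)) := by
    intro i _
    have e1 : (PowerSeries.X : PowerSeries (R d)) ^ i * PowerSeries.C (β d) ^ (p - i)
          * (p.choose i : PowerSeries (R d)) * Ψ
        = PowerSeries.C ((p.choose i : R d) * β d ^ (p - i))
            * (PowerSeries.X ^ i * Ψ) := by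
      rw [map_mul, map_pow, map_natCast]
      ring
    rw [e1, Gt_C_mul, Gt_X_pow_mul]
    ring
  rw [Finset.sum_congr rfl lhs_eq]
  rw [← Finset.sum_range_reflect
    (fun s => (p.choose s : R d) * (β d ^ s * Gt d Ψ (m - p + s))) (p + 1)]
  refine Finset.sum_congr rfl fun i hi => ?_
  have hip : i ≤ p := by simpa [Nat.lt_succ_iff] using hi
  have h1 : p + 1 - 1 - i = p - i := by omega
  rw [h1, Nat.choose_symm hip]
  have h2 : m - p + ((p - i : ℕ) : ℤ) = m - i := by
    have : ((p - i : ℕ) : ℤ) = (p : ℤ) - i := by omega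
    rw [this]; ring
  rw [h2]

lemma coeffZ_SB (j : Fin d) (k : ℕ) (n : ℕ) :
    coeffZ d ((k : ℤ) + n) (SS d j * B d k)
      = (1 + β d * x d j) * (x d j ^ n * fb d (x d j) k) := by
  induction k generalizing n with
  | zero =>
    rw [B, Finset.range_zero, Finset.prod_empty, mul_one, fb, Finset.range_zero,
      Finset.prod_empty, mul_one]
    rw [coeffZ, if_pos (by omega)]
    have : ((0 : ℕ) + (n : ℤ)).toNat = n := by omega
    rw [this, SS, PowerSeries.coeff_C_mul, PowerSeries.coeff_mk]
  | succ k ih =>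
    have hB : SS d j * B d (k + 1)
        = SS d j * B d k
          + (PowerSeries.X + PowerSeries.C (β d))
              * (PowerSeries.C (b d k) * (SS d j * B d k)) := by
      rw [B, Finset.prod_range_succ, ← B]
      ring
    have ht1 : ((k + 1 : ℕ) : ℤ) + n - 1 = (k : ℤ) + n := by push_cast; ring
    have ht2 : ((k + 1 : ℕ) : ℤ) + n = (k : ℤ) + ((n + 1 : ℕ) : ℤ) := by push_cast; ring
    rw [hB, coeffZ_add, coeffZ_XaddC, coeffZ_C_mul, coeffZ_C_mul, ht1, ht2, ih, ih]
    have hfb : fb d (x d j) (k + 1) = fb d (x d j) k * oplus d (x d j) (b d k) := by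
      rw [fb, Finset.prod_range_succ, ← fb]
    rw [hfb, oplus]
    ring

lemma Gt_SB (j : Fin d) (k : ℕ) (n : ℕ) :
    Gt d (SS d j * B d k) ((k : ℤ) + n) = x d j ^ n * fb d (x d j) k := by
  unfold Gt
  have hfun : seriesSum d
      (fun s : ℕ => (-β d) ^ s * coeffZ d ((k : ℤ) + n + s) (SS d j * B d k))
      = seriesSum d (fun s => (-β d) ^ s * (x d j ^ (n + s) * fb d (x d j) k)
          - (-β d) ^ (s + 1) * (x d j ^ (n + (s + 1)) * fb d (x d j) k)) := by
    refine seriesSum_congr _ _ fun s => ?_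
    have hc : (k : ℤ) + n + s = (k : ℤ) + ((n + s : ℕ) : ℤ) := by push_cast; ring
    rw [hc, coeffZ_SB]
    ring
  rw [hfun, seriesSum_telescope (fun s => (-β d) ^ s * (x d j ^ (n + s) * fb d (x d j) k))
    (fun s m h => negbetacut s _ m h)]
  simp

/-- For `m ≥ k`:
`∑_{p=0}^{d-1} ∑_{s=0}^{p} C(p,s) β^s G^{(k)}_{m-p+s} (-1)^p ē_p^{(j)} = x_j^{m-k} [x_j|b]^k`,
where `ē_p^{(j)}` is the `p`-th elementary symmetric function of the `x_i/(1+βx_i)`, `i ≠ j`. -/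
theorem grothendieck_convolution_ebar
    (d k : ℕ) (j : Fin d) (m : ℤ) (hm : (k : ℤ) ≤ m) :
    ∑ p ∈ Finset.range d, ∑ s ∈ Finset.range (p + 1),
        ((p.choose s : ℤ) • (β d ^ s * G d k (m - p + s))) *
          ((-1 : R d) ^ p * esym d (Finset.univ \ {j}) p (xbar d))
      = x d j ^ (m - k).toNat * fb d (x d j) k := by
  classical
  set n : ℕ := (m - k).toNat with hn
  have hmn : m = (k : ℤ) + n := by omega
  have step1 : ∀ p ∈ Finset.range d,
      (∑ s ∈ Finset.range (p + 1),
        ((p.choose s : ℤ) • (β d ^ s * G d k (m - p + s))) *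
          ((-1 : R d) ^ p * esym d (Finset.univ \ {j}) p (xbar d)))
      = Gt d (PowerSeries.C ((-1 : R d) ^ p * esym d (Finset.univ \ {j}) p (xbar d))
          * ((PowerSeries.X + PowerSeries.C (β d)) ^ p * F d k)) m := by
    intro p _
    rw [Gt_C_mul, ← Finset.sum_mul, Gt_pow_mul, mul_comm]
    congr 1
    refine Finset.sum_congr rfl fun s _ => ?_
    rw [G_eq, zsmul_eq_mul, Int.cast_natCast]
  rw [Finset.sum_congr rfl step1, ← Gt_sum]
  have step2 : (∑ p ∈ Finset.range d,
      PowerSeries.C ((-1 : R d) ^ p * esym d (Finset.univ \ {j}) p (xbar d))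
        * ((PowerSeries.X + PowerSeries.C (β d)) ^ p * F d k))
      = F d k * ∏ i ∈ Finset.univ \ {j},
          (1 - PowerSeries.C (xbar d i)
            * (PowerSeries.X + PowerSeries.C (β d))) := by
    rw [prod_one_sub, Finset.mul_sum]
    refine Finset.sum_congr rfl fun p _ => ?_
    ring
  rw [step2, prod_factor, hmn, Gt_SB]

end GrothDet
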